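/- arXiv:0911.4475 — 4 statements merged into one kernel-verified Lean document; each statement's English description precedes it below -/
import Mathlib

section
/- Let m_1, m_2, ..., m_n be integers with m_i ≥ 3 such that m_{i+1} ≡ 1 (mod m_i) for all i, and m_{i+j} ≡ -1 (mod m_i) for all i and all j ≥ 2. Then for every k ∈ {1,...,n-1}, m_k does not divide the sum m_{k+1}·m_{k+2}···m_n + m_{k+2}···m_n + ... + m_n + 1. -/
/-- If `m 1, …, m n` are integers with `m i ≥ 3`, `m (i+1) ≡ 1 (mod m i)` and
`m (i+j) ≡ -1 (mod m i)` for `j ≥ 2`, then for every `k ∈ {1,…,n-1}`, `m k` does not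
divide `∑_{j=k+1}^{n+1} ∏_{i=j}^{n} m i` (empty product = 1). -/
theorem stmt0 (n : ℕ) (m : ℕ → ℤ)
    (hm : ∀ i ∈ Finset.Icc 1 n, 3 ≤ m i)
    (h1 : ∀ i, 1 ≤ i → i + 1 ≤ n → m (i + 1) ≡ 1 [ZMOD m i])
    (h2 : ∀ i j, 1 ≤ i → 2 ≤ j → i + j ≤ n → m (i + j) ≡ -1 [ZMOD m i]) :
    ∀ k ∈ Finset.Icc 1 (n - 1),
      ¬ (m k ∣ ∑ j ∈ Finset.Icc (k + 1) (n + 1), ∏ i ∈ Finset.Icc j n, m i) := by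
  intro k hk hdvd
  simp only [Finset.mem_Icc] at hk
  obtain ⟨hk1, hk2⟩ := hk
  have hn : k + 1 ≤ n := by omega
  obtain ⟨d, hd⟩ : ∃ d, n = k + 1 + d := ⟨n - (k + 1), by omega⟩
  -- products of trailing terms are ≡ (-1)^e
  have hP : ∀ e, e ≤ d → (∏ i ∈ Finset.Icc (n + 1 - e) n, m i) ≡ (-1) ^ e [ZMOD m k] := by
    intro e
    induction e with
    | zero =>
      intro _
      rw [Nat.sub_zero, Finset.Icc_eq_empty (by omega), Finset.prod_empty, pow_zero]
    | succ e ih =>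
      intro he
      have h1e : n + 1 - (e + 1) = n - e := by omega
      rw [h1e, ← Finset.Ico_add_one_right_eq_Icc, Finset.prod_eq_prod_Ico_succ_bot (by omega),
        Finset.Ico_add_one_right_eq_Icc, show (n - e) + 1 = n + 1 - e by omega]
      have hm1 : m (n - e) ≡ -1 [ZMOD m k] := by
        have := h2 k (n - e - k) hk1 (by omega) (by omega)
        rwa [show k + (n - e - k) = n - e by omega] at this
      calc m (n - e) * ∏ i ∈ Finset.Icc (n + 1 - e) n, m i
          ≡ (-1) * (-1) ^ e [ZMOD m k] := hm1.mul (ih (by omega))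
        _ = (-1) ^ (e + 1) := by ring
  -- trailing partial sums
  have hS : ∀ e, e ≤ d → (∑ j ∈ Finset.Icc (n + 1 - e) (n + 1), ∏ i ∈ Finset.Icc j n, m i)
      ≡ (if Even e then 1 else 0) [ZMOD m k] := by
    intro e
    induction e with
    | zero =>
      intro _
      rw [Nat.sub_zero, Finset.Icc_self, Finset.sum_singleton,
        Finset.Icc_eq_empty (by omega), Finset.prod_empty]
      simp
    | succ e ih =>
      intro he
      have h1e : n + 1 - (e + 1) = n - e := by omega
      rw [h1e, ← Finset.Ico_add_one_right_eq_Icc, Finset.sum_eq_sum_Ico_succ_bot (by omega),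
        Finset.Ico_add_one_right_eq_Icc, show (n - e) + 1 = n + 1 - e by omega]
      have hPe := hP (e + 1) he
      rw [h1e] at hPe
      calc (∏ i ∈ Finset.Icc (n - e) n, m i)
            + ∑ j ∈ Finset.Icc (n + 1 - e) (n + 1), ∏ i ∈ Finset.Icc j n, m i
          ≡ (-1) ^ (e + 1) + (if Even e then 1 else 0) [ZMOD m k] := hPe.add (ih (by omega))
        _ = (if Even (e + 1) then 1 else 0) := by
            rcases Nat.even_or_odd e with h | h
            · simp [h, Nat.even_add_one, pow_succ, h.neg_one_pow]
            · simp [h, Nat.even_add_one, Nat.not_even_iff_odd, pow_succ, h.neg_one_pow]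
  have hsplit : ∑ j ∈ Finset.Icc (k + 1) (n + 1), ∏ i ∈ Finset.Icc j n, m i
      = (∏ i ∈ Finset.Icc (k + 1) n, m i)
        + ∑ j ∈ Finset.Icc (k + 2) (n + 1), ∏ i ∈ Finset.Icc j n, m i := by
    rw [← Finset.Ico_add_one_right_eq_Icc (k + 1), Finset.sum_eq_sum_Ico_succ_bot (by omega),
      Finset.Ico_add_one_right_eq_Icc]
  have hPk1 : (∏ i ∈ Finset.Icc (k + 1) n, m i) ≡ (-1) ^ d [ZMOD m k] := by
    rw [← Finset.Ico_add_one_right_eq_Icc, Finset.prod_eq_prod_Ico_succ_bot (by omega), Finset.Ico_add_one_right_eq_Icc]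
    have h1' := h1 k hk1 hn
    have hPd := hP d le_rfl
    rw [show n + 1 - d = k + 2 by omega] at hPd
    calc m (k + 1) * ∏ i ∈ Finset.Icc (k + 2) n, m i
        ≡ 1 * (-1) ^ d [ZMOD m k] := h1'.mul hPd
      _ = (-1) ^ d := one_mul _
  have hSd := hS d le_rfl
  rw [show n + 1 - d = k + 2 by omega] at hSd
  have hT : (∑ j ∈ Finset.Icc (k + 1) (n + 1), ∏ i ∈ Finset.Icc j n, m i)
      ≡ (-1) ^ d + (if Even d then 1 else 0) [ZMOD m k] := by
    rw [hsplit]; exact hPk1.add hSd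
  have hmk : 3 ≤ m k := hm k (Finset.mem_Icc.mpr ⟨hk1, by omega⟩)
  have hdvd2 : m k ∣ (-1) ^ d + (if Even d then 1 else 0) := by
    have h0 : (∑ j ∈ Finset.Icc (k + 1) (n + 1), ∏ i ∈ Finset.Icc j n, m i)
        ≡ 0 [ZMOD m k] := (Int.modEq_zero_iff_dvd).mpr hdvd
    exact (Int.modEq_zero_iff_dvd).mp (hT.symm.trans h0)
  rcases Nat.even_or_odd d with h | h
  · rw [h.neg_one_pow, if_pos h] at hdvd2
    have := Int.le_of_dvd (by norm_num) hdvd2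
    omega
  · rw [h.neg_one_pow, if_neg (Nat.not_even_iff_odd.mpr h), add_zero] at hdvd2
    rw [Int.dvd_neg] at hdvd2
    have := Int.le_of_dvd one_pos hdvd2
    omega
end

section
/- There exists a strictly increasing sequence of primes m_1 < m_2 < ... with m_1 ≥ 5 such that m_{i+1} ≡ 1 (mod m_i) and m_{i+j} ≡ -1 (mod m_i) for all i ≥ 1 and j ≥ 2. -/
private lemma key' (P L : ℕ) (hP : 0 < P) (hL : L.Prime) (hco : Nat.Coprime P L) :
    ∃ p, p.Prime ∧ L < p ∧ ((p : ZMod P) = -1) ∧ ((p : ZMod L) = 1) := by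
  have hq : 0 < P * L := Nat.mul_pos hP hL.pos
  haveI : NeZero (P * L) := ⟨hq.ne'⟩
  let e := ZMod.chineseRemainder hco
  set a : ZMod (P * L) := e.symm (-1, 1) with ha
  have hu : IsUnit a := by
    have h1 : IsUnit ((-1, 1) : ZMod P × ZMod L) :=
      IsUnit.of_mul_eq_one (-1, 1) (by simp [Prod.mul_def])
    exact h1.map e.symm
  obtain ⟨p, hpgt, hp, hpa⟩ := Nat.forall_exists_prime_gt_and_eq_mod hu L
  refine ⟨p, hp, hpgt, ?_, ?_⟩
  · have := congrArg (fun x => (e x).1) hpa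
    simpa [ha, map_natCast] using this
  · have := congrArg (fun x => (e x).2) hpa
    simpa [ha, map_natCast] using this

open Classical in
noncomputable def nxt (P L : ℕ) : ℕ :=
  if h : ∃ p, p.Prime ∧ L < p ∧ ((p : ZMod P) = -1) ∧ ((p : ZMod L) = 1) then h.choose else 0

noncomputable def mseq : ℕ → ℕ × ℕ
  | 0 => (1, 5)
  | n + 1 => ((mseq n).1 * (mseq n).2, nxt (mseq n).1 (mseq n).2)

private lemma nxt_spec {P L : ℕ} (hP : 0 < P) (hL : L.Prime) (hco : Nat.Coprime P L) :
    (nxt P L).Prime ∧ L < nxt P L ∧ ((nxt P L : ZMod P) = -1) ∧ ((nxt P L : ZMod L) = 1) := by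
  have h := key' P L hP hL hco
  rw [nxt, dif_pos h]
  exact h.choose_spec

private lemma inv : ∀ n : ℕ, 0 < (mseq n).1 ∧ ((mseq n).2).Prime ∧ 5 ≤ (mseq n).2 ∧
    Nat.Coprime (mseq n).1 (mseq n).2 := by
  intro n
  induction n with
  | zero => exact ⟨one_pos, by show Nat.Prime 5; norm_num, le_refl 5, Nat.coprime_one_left _⟩
  | succ n ih =>
    obtain ⟨hP, hL, h5, hco⟩ := ih
    obtain ⟨hp, hgt, hc1, hc2⟩ := nxt_spec hP hL hco
    refine ⟨Nat.mul_pos hP hL.pos, hp, le_of_lt (lt_of_le_of_lt h5 hgt), ?_⟩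
    -- coprimality of P*L with the new prime p
    set p := nxt (mseq n).1 (mseq n).2
    have hcoL : Nat.Coprime (mseq n).2 p :=
      (Nat.coprime_primes hL hp).mpr (ne_of_lt hgt)
    have hcoP : Nat.Coprime (mseq n).1 p := by
      have hPd : (mseq n).1 ∣ p + 1 := by
        haveI : NeZero (mseq n).1 := ⟨hP.ne'⟩
        have : ((p + 1 : ℕ) : ZMod (mseq n).1) = 0 := by push_cast [hc1]; ring
        exact (ZMod.natCast_eq_zero_iff _ _).mp this
      have h1 : Nat.gcd (mseq n).1 p ∣ p + 1 := (Nat.gcd_dvd_left _ _).trans hPd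
      have h2 : Nat.gcd (mseq n).1 p ∣ p := Nat.gcd_dvd_right _ _
      have : Nat.gcd (mseq n).1 p ∣ 1 := by simpa using Nat.dvd_sub h1 h2
      exact Nat.dvd_one.mp this
    exact Nat.Coprime.mul hcoP hcoL

private lemma dvd_prod : ∀ n k : ℕ, k < n → (mseq k).2 ∣ (mseq n).1 := by
  intro n
  induction n with
  | zero => intro k hk; omega
  | succ n ih =>
    intro k hk
    rcases Nat.lt_succ_iff_lt_or_eq.mp hk with h | h
    · exact (ih k h).trans ⟨(mseq n).2, rfl⟩
    · subst h
      show (mseq k).2 ∣ (mseq k).1 * (mseq k).2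
      exact Dvd.intro_left _ rfl

/-- There is a strictly increasing sequence of primes `m 1 < m 2 < …` with `m 1 ≥ 5`
such that `m (i+1) ≡ 1 (mod m i)` and `m (i+j) ≡ -1 (mod m i)` for all `i ≥ 1`, `j ≥ 2`. -/
theorem stmt2 : ∃ m : ℕ → ℕ,
    (∀ i, 1 ≤ i → (m i).Prime) ∧ 5 ≤ m 1 ∧
    (∀ i, 1 ≤ i → m i < m (i + 1)) ∧
    (∀ i, 1 ≤ i → (m (i + 1) : ℤ) ≡ 1 [ZMOD (m i : ℤ)]) ∧
    (∀ i j, 1 ≤ i → 2 ≤ j → (m (i + j) : ℤ) ≡ -1 [ZMOD (m i : ℤ)]) := by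
  refine ⟨fun n => (mseq (n - 1)).2, ?_, ?_, ?_, ?_, ?_⟩
  · intro i hi
    exact (inv (i - 1)).2.1
  · simp [mseq]
  · intro i hi
    obtain ⟨k, rfl⟩ : ∃ k, i = k + 1 := ⟨i - 1, by omega⟩
    simp only [Nat.add_sub_cancel]
    obtain ⟨hP, hL, h5, hco⟩ := inv k
    exact (nxt_spec hP hL hco).2.1
  · intro i hi
    obtain ⟨k, rfl⟩ : ∃ k, i = k + 1 := ⟨i - 1, by omega⟩
    simp only [Nat.add_sub_cancel]
    obtain ⟨hP, hL, h5, hco⟩ := inv k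
    have h1 := (nxt_spec hP hL hco).2.2.2
    rw [← ZMod.intCast_eq_intCast_iff]
    push_cast
    exact h1
  · intro i j hi hj
    obtain ⟨k, rfl⟩ : ∃ k, i = k + 1 := ⟨i - 1, by omega⟩
    obtain ⟨l, hl⟩ : ∃ l, j = l + 1 ∧ k < k + l := ⟨j - 1, by omega, by omega⟩
    have hidx : k + 1 + j - 1 = (k + l) + 1 := by omega
    simp only [Nat.add_sub_cancel, hidx]
    obtain ⟨hP, hL, h5, hco⟩ := inv (k + l)
    have h1 := (nxt_spec hP hL hco).2.2.1
    have hdvd : (mseq k).2 ∣ (mseq (k + l)).1 := dvd_prod (k + l) k hl.2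
    have h2 : ((nxt (mseq (k + l)).1 (mseq (k + l)).2 : ℕ) : ZMod (mseq k).2) = -1 := by
      have := congrArg (ZMod.castHom hdvd (ZMod (mseq k).2)) h1
      simpa [map_neg, map_one] using this
    rw [← ZMod.intCast_eq_intCast_iff]
    push_cast
    exact h2
end

section
/- In the finite setting X = Y = {1,...,N} with uniform marginals and cost c: X×Y → [0,∞), a set Γ ⊆ X×Y is cyclically c-monotone (for all (i_1,j_1),...,(i_n,j_n) ∈ Γ, Σ_k c(i_k,j_k) ≤ Σ_k c(i_k, j_{k+1}) with j_{n+1} = j_1) if and only if it is strongly cyclically c-monotone (there exist φ, ψ: {1,...,N} → ℝ with φ(i)+ψ(j) ≤ c(i,j) everywhere and equality on Γ). -/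

private def cval {N : ℕ} (c : Fin N → Fin N → ℝ) : Fin N → List (Fin N × Fin N) → ℝ
  | _, [] => 0
  | x, m :: M => c x m.2 - c m.1 m.2 + cval c m.1 M

private lemma cval_eq {N : ℕ} (c : Fin N → Fin N → ℝ) :
    ∀ (M : List (Fin N × Fin N)) (m : Fin N × Fin N) (x : Fin N),
    cval c x (m :: M) = c x m.2
      + (∑ k : Fin M.length, c ((m :: M).get k.castSucc).1 ((m :: M).get k.succ).2)
      - ∑ k : Fin (M.length + 1), c ((m :: M).get k).1 ((m :: M).get k).2 := by
  intro M
  induction M with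
  | nil => intro m x; simp [cval]
  | cons m' M'' ih =>
      intro m x
      rw [show cval c x (m :: m' :: M'') = c x m.2 - c m.1 m.2 + cval c m.1 (m' :: M'') from rfl,
        ih m' m.1]
      simp only [List.length_cons, Fin.sum_univ_succ, List.get_eq_getElem,
        Fin.val_succ, Fin.coe_castSucc, Fin.val_zero, List.getElem_cons_succ,
        List.getElem_cons_zero]
      ring

private lemma castSucc_add_one' {n : ℕ} (k : Fin n) :
    (k.castSucc : Fin (n + 1)) + 1 = k.succ := by
  apply Fin.ext
  simp [Fin.add_def, Nat.mod_eq_of_lt, Nat.lt_succ_iff, k.isLt]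

private lemma cval_key {N : ℕ} (c : Fin N → Fin N → ℝ) (Γ : Set (Fin N × Fin N))
    (hyp : ∀ (n : ℕ) (a b : Fin (n + 1) → Fin N), (∀ k, (a k, b k) ∈ Γ) →
        ∑ k, c (a k) (b k) ≤ ∑ k, c (a k) (b (k + 1)))
    (M : List (Fin N × Fin N)) (hM : M ≠ []) (hΓ : ∀ q ∈ M, q ∈ Γ) :
    0 ≤ cval c (M.getLast hM).1 M := by
  obtain ⟨m, M', rfl⟩ := List.exists_cons_of_ne_nil hM
  set n := M'.length with hn
  set g : Fin (n + 1) → Fin N × Fin N := fun k => (m :: M').get k with hg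
  have hmem : ∀ k, ((g k).1, (g k).2) ∈ Γ := by
    intro k
    have := hΓ _ (List.get_mem (m :: M') k)
    exact this
  have h1 := hyp n (fun k => (g k).1) (fun k => (g k).2) hmem
  have hlast : (List.getLast (m :: M') hM) = g (Fin.last n) := by
    rw [List.getLast_eq_getElem]
    rfl
  rw [hlast, cval_eq]
  have hcross : (∑ k : Fin (n + 1), c ((g k).1) ((g (k + 1)).2))
      = c ((g (Fin.last n)).1) m.2
        + ∑ k : Fin n, c ((m :: M').get k.castSucc).1 ((m :: M').get k.succ).2 := by
    rw [Fin.sum_univ_castSucc]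
    have h0 : (Fin.last n : Fin (n+1)) + 1 = 0 := by
      apply Fin.ext; simp [Fin.add_def]
    rw [h0]
    have : ∀ k : Fin n, (g (k.castSucc + 1)) = (m :: M').get k.succ := by
      intro k; rw [castSucc_add_one']
    simp only [this]
    have hg0 : g 0 = m := rfl
    rw [add_comm]
    congr 1
  have := le_trans h1 (le_of_eq hcross)
  linarith [this]

/-- In the finite setting, a set Γ is cyclically c-monotone if and only if it is strongly
cyclically c-monotone (there exist potentials φ, ψ with φ i + ψ j ≤ c i j everywhere and
equality on Γ). -/
theorem stmt8 (N : ℕ) (hN : 0 < N) (c : Fin N → Fin N → ℝ)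
    (hc : ∀ i j, 0 ≤ c i j) (Γ : Set (Fin N × Fin N)) :
    (∀ (n : ℕ) (a b : Fin (n + 1) → Fin N), (∀ k, (a k, b k) ∈ Γ) →
        ∑ k, c (a k) (b k) ≤ ∑ k, c (a k) (b (k + 1))) ↔
      (∃ φ ψ : Fin N → ℝ, (∀ i j, φ i + ψ j ≤ c i j) ∧
        ∀ p ∈ Γ, φ p.1 + ψ p.2 = c p.1 p.2) := by
  haveI : Nonempty (Fin N) := ⟨⟨0, hN⟩⟩
  constructor
  · intro hyp
    rcases Set.eq_empty_or_nonempty Γ with hΓe | ⟨⟨i0, j0⟩, hij0⟩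
    · exact ⟨fun _ => 0, fun _ => 0, fun i j => by simpa using hc i j,
        fun p hp => by simp [hΓe] at hp⟩
    · -- chain-value sets
      set S : Fin N → Set ℝ := fun x =>
        { v | ∃ L : List (Fin N × Fin N), (∀ q ∈ L, q ∈ Γ) ∧
            v = cval c x (L ++ [(i0, j0)]) } with hS
      have hSne : ∀ x, (S x).Nonempty := by
        intro x
        exact ⟨cval c x ([] ++ [(i0, j0)]), [], by simp, rfl⟩
      set B : ℝ := ∑ i, ∑ j, c i j with hB
      have hcB : ∀ z y, c z y ≤ B := by
        intro z y
        calc c z y ≤ ∑ j, c z j :=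
              Finset.single_le_sum (fun j _ => hc z j) (Finset.mem_univ y)
          _ ≤ B := Finset.single_le_sum
              (fun i _ => Finset.sum_nonneg fun j _ => hc i j) (Finset.mem_univ z)
      have hSbdd : ∀ x, ∀ v ∈ S x, -B ≤ v := by
        intro x v hv
        obtain ⟨L, hL, rfl⟩ := hv
        have hMne : (L ++ [(i0, j0)]) ≠ [] := by simp
        obtain ⟨m, T, hMT⟩ := List.exists_cons_of_ne_nil hMne
        have hΓM : ∀ q ∈ L ++ [(i0, j0)], q ∈ Γ := by
          intro q hq
          rcases List.mem_append.1 hq with h | h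
          · exact hL q h
          · simp at h; subst h; exact hij0
        have hkey := cval_key c Γ hyp (L ++ [(i0, j0)]) hMne hΓM
        set z := ((L ++ [(i0, j0)]).getLast hMne).1 with hz
        have hdiff : cval c x (L ++ [(i0, j0)]) =
            cval c z (L ++ [(i0, j0)]) + c x m.2 - c z m.2 := by
          rw [hMT]
          simp only [cval]
          ring
        have h1 : (0:ℝ) ≤ c x m.2 := hc _ _
        have h2 : c z m.2 ≤ B := hcB _ _
        linarith
      have hSbdd' : ∀ x, BddBelow (S x) := fun x => ⟨-B, fun v hv => hSbdd x v hv⟩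
      set φ : Fin N → ℝ := fun x => sInf (S x) with hφ
      have hext : ∀ x' y', (x', y') ∈ Γ → ∀ x v, v ∈ S x' →
          c x y' - c x' y' + v ∈ S x := by
        intro x' y' hxy x v hv
        obtain ⟨L, hL, rfl⟩ := hv
        refine ⟨(x', y') :: L, ?_, ?_⟩
        · intro q hq
          rcases List.mem_cons.1 hq with h | h
          · subst h; exact hxy
          · exact hL q h
        · simp only [List.cons_append, cval]
      have hφle : ∀ x' y', (x', y') ∈ Γ → ∀ x, φ x ≤ c x y' - c x' y' + φ x' := by
        intro x' y' hxy x
        have : ∀ v ∈ S x', φ x - (c x y' - c x' y') ≤ v := by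
          intro v hv
          have := csInf_le (hSbdd' x) (hext x' y' hxy x v hv)
          linarith
        have := le_csInf (hSne x') this
        linarith
      set ψ : Fin N → ℝ := fun j => ⨅ i, (c i j - φ i) with hψ
      have hψle : ∀ i j, ψ j ≤ c i j - φ i := by
        intro i j
        exact ciInf_le (Finite.bddBelow_range _) i
      refine ⟨φ, ψ, fun i j => by linarith [hψle i j], ?_⟩
      rintro ⟨x', y'⟩ hp
      have hge : c x' y' - φ x' ≤ ψ y' := by
        apply le_ciInf
        intro x
        linarith [hφle x' y' hp x]
      have := hψle x' y'
      simp only at this hge ⊢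
      linarith
  · rintro ⟨φ, ψ, h1, h2⟩ n a b hab
    have e1 : ∑ k, c (a k) (b k) = ∑ k, (φ (a k) + ψ (b k)) := by
      apply Finset.sum_congr rfl
      intro k _
      exact (h2 _ (hab k)).symm
    have e2 : ∑ k : Fin (n+1), ψ (b (k + 1)) = ∑ k : Fin (n+1), ψ (b k) :=
      Fintype.sum_equiv (Equiv.addRight (1 : Fin (n+1)))
        (fun k => ψ (b (k + 1))) (fun k => ψ (b k)) (fun k => rfl)
    calc ∑ k, c (a k) (b k) = ∑ k, (φ (a k) + ψ (b k)) := e1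
      _ = ∑ k, φ (a k) + ∑ k, ψ (b k) := Finset.sum_add_distrib
      _ = ∑ k, φ (a k) + ∑ k, ψ (b (k+1)) := by rw [e2]
      _ = ∑ k, (φ (a k) + ψ (b (k+1))) := Finset.sum_add_distrib.symm
      _ ≤ ∑ k, c (a k) (b (k+1)) := Finset.sum_le_sum fun k _ => h1 _ _
end

section
/- In the finite setting, the support of every optimal transport plan π̂ for the cost c is a cyclically c-monotone subset of {1,...,N}×{1,...,N}. -/
/-- In the finite setting, the support of every optimal transport plan is cyclically
c-monotone. -/
theorem stmt9 (N : ℕ) (hN : 0 < N) (c : Fin N → Fin N → ℝ)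
    (hc : ∀ i j, 0 ≤ c i j)
    (Pi : Set (Fin N → Fin N → ℝ))
    (hPi : Pi = {π | (∀ i j, 0 ≤ π i j) ∧ (∀ i, ∑ j, π i j = 1 / (N : ℝ)) ∧
      (∀ j, ∑ i, π i j = 1 / (N : ℝ))})
    (π₀ : Fin N → Fin N → ℝ) (hπ₀ : π₀ ∈ Pi)
    (hopt : ∀ π ∈ Pi, ∑ i, ∑ j, c i j * π₀ i j ≤ ∑ i, ∑ j, c i j * π i j) :
    ∀ (n : ℕ) (a b : Fin (n + 1) → Fin N), (∀ k, 0 < π₀ (a k) (b k)) →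
      ∑ k, c (a k) (b k) ≤ ∑ k, c (a k) (b (k + 1)) := by
  intro n a b hab
  subst hPi
  obtain ⟨h0, hrow, hcol⟩ := hπ₀
  -- minimum mass on the cycle
  set m : ℝ := Finset.univ.inf' Finset.univ_nonempty (fun k => π₀ (a k) (b k)) with hm
  have hm0 : 0 < m := by
    rw [hm, Finset.lt_inf'_iff]
    exact fun k _ => hab k
  have hmle : ∀ k, m ≤ π₀ (a k) (b k) := fun k => Finset.inf'_le _ (Finset.mem_univ k)
  set ε : ℝ := m / (n + 1) with hε
  have hε0 : 0 < ε := by positivity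
  set f : Fin N → Fin N → ℝ := fun i j =>
    ∑ k : Fin (n+1), ((if a k = i ∧ b (k+1) = j then (1:ℝ) else 0)
      - (if a k = i ∧ b k = j then (1:ℝ) else 0)) with hf
  set π : Fin N → Fin N → ℝ := fun i j => π₀ i j + ε * f i j with hπ
  -- key sum identity
  have hkey : ∀ (g h : Fin (n+1) → Fin N),
      ∑ i, ∑ j, c i j * ∑ k : Fin (n+1), (if g k = i ∧ h k = j then (1:ℝ) else 0)
        = ∑ k, c (g k) (h k) := by
    intro g h
    simp only [Finset.mul_sum]
    rw [Finset.sum_congr rfl (fun i _ => Finset.sum_comm), Finset.sum_comm]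
    congr 1; ext k
    simp [ite_and, mul_ite, Finset.sum_ite_eq]
  have hfrow : ∀ i, ∑ j, f i j = 0 := by
    intro i
    simp only [hf, Finset.sum_sub_distrib]
    rw [Finset.sum_comm, Finset.sum_comm (γ := Fin N)]
    simp [ite_and, Finset.sum_ite_eq]
  have hbshift : ∀ j, (∑ k : Fin (n+1), (if b (k+1) = j then (1:ℝ) else 0))
      = ∑ k : Fin (n+1), (if b k = j then (1:ℝ) else 0) :=
    fun j => Fintype.sum_equiv (Equiv.addRight 1) _ _ (fun k => rfl)
  have hfcol : ∀ j, ∑ i, f i j = 0 := by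
    intro j
    simp only [hf, Finset.sum_sub_distrib]
    rw [Finset.sum_comm, Finset.sum_comm (γ := Fin N)]
    simp only [ite_and]
    have : ∀ (h : Fin (n+1) → Fin N) k,
        (∑ i, if a k = i then (if h k = j then (1:ℝ) else 0) else 0)
          = (if h k = j then (1:ℝ) else 0) := by
      intro h k; rw [Finset.sum_ite_eq]; simp
    rw [Finset.sum_congr rfl (fun k _ => this (fun k => b (k+1)) k),
        Finset.sum_congr rfl (fun k _ => this b k), hbshift, sub_self]
  -- nonnegativity of π
  have hπ0 : ∀ i j, 0 ≤ π i j := by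
    intro i j
    have hpos : 0 ≤ ∑ k : Fin (n+1), (if a k = i ∧ b (k+1) = j then (1:ℝ) else 0) :=
      Finset.sum_nonneg (fun k _ => by positivity)
    by_cases hco : ∃ k, a k = i ∧ b k = j
    · obtain ⟨k₀, hk₁, hk₂⟩ := hco
      have hneg : (∑ k : Fin (n+1), (if a k = i ∧ b k = j then (1:ℝ) else 0)) ≤ n + 1 := by
        calc (∑ k : Fin (n+1), if a k = i ∧ b k = j then (1:ℝ) else 0)
            ≤ ∑ k : Fin (n+1), (1:ℝ) := Finset.sum_le_sum (fun k _ => by split <;> norm_num)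
          _ = n + 1 := by simp
      have hmij : m ≤ π₀ i j := hk₁ ▸ hk₂ ▸ hmle k₀
      have : ε * (∑ k : Fin (n+1), (if a k = i ∧ b k = j then (1:ℝ) else 0)) ≤ m := by
        calc ε * _ ≤ ε * (n+1) := by
              exact mul_le_mul_of_nonneg_left hneg hε0.le
          _ = m := by rw [hε]; field_simp
      simp only [hπ, hf, Finset.sum_sub_distrib, mul_sub]
      nlinarith [mul_nonneg hε0.le hpos]
    · push_neg at hco
      have : (∑ k : Fin (n+1), (if a k = i ∧ b k = j then (1:ℝ) else 0)) = 0 := by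
        apply Finset.sum_eq_zero; intro k _
        simp only [ite_eq_right_iff, one_ne_zero]
        intro ⟨h1, h2⟩; exact (hco k h1 h2).elim
      simp only [hπ, hf, Finset.sum_sub_distrib, mul_sub, this, mul_zero, sub_zero]
      exact add_nonneg (h0 i j) (mul_nonneg hε0.le hpos)
  have hπmem : π ∈ {π : Fin N → Fin N → ℝ | (∀ i j, 0 ≤ π i j) ∧
      (∀ i, ∑ j, π i j = 1 / (N : ℝ)) ∧ (∀ j, ∑ i, π i j = 1 / (N : ℝ))} := by
    refine ⟨hπ0, fun i => ?_, fun j => ?_⟩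
    · simp only [hπ, Finset.sum_add_distrib, ← Finset.mul_sum, hfrow i, mul_zero, add_zero]
      exact hrow i
    · simp only [hπ, Finset.sum_add_distrib, ← Finset.mul_sum]
      rw [hfcol j, mul_zero, add_zero]
      exact hcol j
  have hS := hopt π hπmem
  have hexp : ∑ i, ∑ j, c i j * π i j
      = (∑ i, ∑ j, c i j * π₀ i j)
        + ε * ((∑ k, c (a k) (b (k+1))) - ∑ k, c (a k) (b k)) := by
    have : ∀ i j, c i j * π i j = c i j * π₀ i j
        + ε * (c i j * (∑ k : Fin (n+1), (if a k = i ∧ b (k+1) = j then (1:ℝ) else 0))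
             - c i j * (∑ k : Fin (n+1), (if a k = i ∧ b k = j then (1:ℝ) else 0))) := by
      intro i j
      simp only [hπ, hf, Finset.sum_sub_distrib]
      ring
    simp only [this, Finset.sum_add_distrib, ← Finset.mul_sum, Finset.sum_sub_distrib]
    rw [hkey (fun k => a k) (fun k => b (k+1)), hkey a b]
  rw [hexp] at hS
  nlinarith [hS, hε0]
end
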